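/- For every fixed v ∈ ∏_{k≤n₊}(−π,0) × ∏_{k>n₊}(0,π), the function ℝⁿ → ℝ given by h ↦ Re S(h + iv) is strictly concave on ℝⁿ. -/

import Mathlib

open Matrix Real

/-- The dilogarithm `Li₂(z) = -∫₀¹ Log(1 - z t) / t dt`. -/
noncomputable def Li2 (z : ℂ) : ℂ :=
  -∫ t in (0:ℝ)..(1:ℝ), Complex.log (1 - z * (t : ℂ)) / (t : ℂ)

/-- The sign `ε_k`: `1` for the first `nP` indices, `-1` for the rest. -/
def epsR (nP n : ℕ) (k : Fin n) : ℝ := if (k : ℕ) < nP then 1 else -1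

/-- The potential function
`S(y) = i yᵀQy + Σ (-ε_k) y_k w_k + i Σ_{k ≤ n₊} Li₂(-e^{y_k}) - i Σ_{k > n₊} Li₂(-e^{y_k})`. -/
noncomputable def potential (nP nN : ℕ) (Q : Matrix (Fin (nP + nN)) (Fin (nP + nN)) ℝ)
    (w : Fin (nP + nN) → ℂ) (y : Fin (nP + nN) → ℂ) : ℂ :=
  Complex.I * (y ⬝ᵥ (Q.map Complex.ofReal).mulVec y)
    + ∑ k, -(epsR nP (nP + nN) k : ℂ) * y k * w k
    + Complex.I * ∑ k ∈ Finset.univ.filter (fun k : Fin (nP + nN) => (k : ℕ) < nP),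
        Li2 (-Complex.exp (y k))
    - Complex.I * ∑ k ∈ Finset.univ.filter (fun k : Fin (nP + nN) => ¬ (k : ℕ) < nP),
        Li2 (-Complex.exp (y k))

lemma mem_slit {a : ℂ} (ha : a.im ≠ 0) (u : ℝ) : 1 + a * (u:ℂ) ∈ Complex.slitPlane := by
  rcases eq_or_ne u 0 with h | h
  · simp [h, Complex.mem_slitPlane_iff]
  · refine Complex.mem_slitPlane_iff.2 (Or.inr ?_)
    simp only [Complex.add_im, Complex.one_im, Complex.mul_im, Complex.ofReal_im,
      Complex.ofReal_re, mul_zero, add_zero, zero_add]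
    exact mul_ne_zero ha h

noncomputable def gtil (a : ℂ) (u : ℝ) : ℂ :=
  if u = 0 then a else Complex.log (1 + a * u) / u

lemma gtil_cont {a : ℂ} (ha : a.im ≠ 0) : Continuous (gtil a) := by
  rw [continuous_iff_continuousAt]
  intro u
  rcases eq_or_ne u 0 with rfl | hu
  · -- continuity at 0 via the derivative of log(1+a u)
    have h1 : HasDerivAt (fun u : ℝ => 1 + a * (u:ℂ)) a 0 := by
      simpa using ((Complex.ofRealCLM.hasDerivAt (x := (0:ℝ))).const_mul a).const_add 1
    have h2 : HasDerivAt (fun u : ℝ => Complex.log (1 + a * (u:ℂ))) a 0 := by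
      have := h1.clog_real (by simpa using mem_slit ha 0)
      simpa using this
    have h3 := hasDerivAt_iff_tendsto_slope.1 h2
    have h4 : Filter.Tendsto (gtil a) (nhdsWithin 0 {(0:ℝ)}ᶜ) (nhds a) := by
      refine h3.congr' ?_
      filter_upwards [self_mem_nhdsWithin] with u hu
      have hu' : u ≠ 0 := hu
      simp [slope, gtil, hu', Complex.real_smul, div_eq_inv_mul, Complex.log_one]
    have h5 : Filter.Tendsto (gtil a) (pure (0:ℝ)) (nhds a) := by
      simpa [gtil] using tendsto_pure_nhds (gtil a) 0
    have : Filter.Tendsto (gtil a) (nhds 0) (nhds a) := by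
      rw [← nhdsNE_sup_pure]
      exact h4.sup h5
    simpa [ContinuousAt, gtil] using this
  · have hcont : ContinuousAt (fun u : ℝ => Complex.log (1 + a * u) / u) u := by
      apply ContinuousAt.div
      · apply ContinuousAt.clog
        · fun_prop
        · exact mem_slit ha u
      · fun_prop
      · exact_mod_cast hu
    refine hcont.congr ?_
    filter_upwards [isOpen_compl_singleton.mem_nhds hu] with x hx
    have hx' : x ≠ 0 := hx
    simp [gtil, hx']

lemma ae_ne_zero : ∀ᵐ u ∂(MeasureTheory.volume : MeasureTheory.Measure ℝ), u ≠ 0 := by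
  rw [MeasureTheory.ae_iff]
  simpa using MeasureTheory.measure_singleton (0:ℝ)

lemma gval_intable {a : ℂ} (ha : a.im ≠ 0) (r : ℝ) :
    IntervalIntegrable (fun u : ℝ => Complex.log (1 + a * u) / u) MeasureTheory.volume 0 r := by
  refine ((gtil_cont ha).intervalIntegrable 0 r).congr_ae ?_
  refine MeasureTheory.ae_restrict_of_ae ?_
  filter_upwards [ae_ne_zero] with u hu
  simp [gtil, hu]

lemma li2_formula {a : ℂ} (ha : a.im ≠ 0) (r : ℝ) :
    Li2 (-((r:ℂ) * a)) = -∫ u in (0:ℝ)..r, Complex.log (1 + a * u) / u := by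
  unfold Li2
  congr 1
  have hpt : ∀ t : ℝ, Complex.log (1 - -((r:ℂ) * a) * t) / t
      = r • ((fun u : ℝ => Complex.log (1 + a * u) / u) (r * t)) := by
    intro t
    rcases eq_or_ne t 0 with rfl | ht
    · simp
    · have hrt : ((r * t : ℝ) : ℂ) = (r:ℂ) * t := by push_cast; ring
      simp only [hrt, Complex.real_smul]
      rw [div_mul_eq_div_div_swap]
      have h1 : 1 - -((r:ℂ) * a) * t = 1 + a * ((r:ℂ) * t) := by ring
      rw [h1]
      rcases eq_or_ne r 0 with rfl | hr
      · simp
      · have hr' : (r:ℂ) ≠ 0 := by exact_mod_cast hr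
        have ht' : (t:ℂ) ≠ 0 := by exact_mod_cast ht
        field_simp
  rw [intervalIntegral.integral_congr (g := fun t : ℝ => r • ((fun u : ℝ => Complex.log (1 + a * u) / u) (r * t))) (fun t _ => hpt t)]
  rw [intervalIntegral.integral_smul]
  rw [intervalIntegral.smul_integral_comp_mul_left (fun u : ℝ => Complex.log (1 + a * u) / u) r]
  norm_num

noncomputable def phiF (a : ℂ) (u : ℝ) : ℝ := (Complex.log (1 + a * u)).im / u

lemma li2_im {a : ℂ} (ha : a.im ≠ 0) (r : ℝ) :
    (Li2 (-((r:ℂ) * a))).im = -∫ u in (0:ℝ)..r, phiF a u := by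
  rw [li2_formula ha r, Complex.neg_im]
  congr 1
  have h := (Complex.imCLM.intervalIntegral_comp_comm (gval_intable ha r)).symm
  simp only [Complex.imCLM_apply] at h
  rw [h]
  apply intervalIntegral.integral_congr
  intro u _
  simp [phiF, Complex.div_ofReal_im]

lemma phiF_meas (a : ℂ) : Measurable (phiF a) := by
  apply Measurable.div
  · exact Complex.measurable_im.comp (Complex.measurable_log.comp (by fun_prop))
  · exact measurable_id

lemma phiF_intable {a : ℂ} (ha : a.im ≠ 0) (r : ℝ) :
    IntervalIntegrable (phiF a) MeasureTheory.volume 0 r := by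
  refine ((Complex.continuous_im.comp (gtil_cont ha)).intervalIntegrable 0 r).congr_ae ?_
  refine MeasureTheory.ae_restrict_of_ae ?_
  filter_upwards [ae_ne_zero] with u hu
  simp [gtil, hu, phiF, Complex.div_ofReal_im]

lemma phiF_contAt {a : ℂ} (ha : a.im ≠ 0) {r : ℝ} (hr : r ≠ 0) :
    ContinuousAt (phiF a) r := by
  refine ((Complex.continuous_im.comp (gtil_cont ha)).continuousAt).congr ?_
  filter_upwards [isOpen_compl_singleton.mem_nhds hr] with x hx
  have hx' : x ≠ 0 := hx
  simp [gtil, hx', phiF, Complex.div_ofReal_im]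

/-- Key 1D lemma: strict concavity of `t ↦ -ε · Im Li₂(-e^{t+iv})`. -/
lemma key1d (ε v : ℝ) (hs : ε * Real.sin v < 0) :
    StrictConcaveOn ℝ (Set.univ : Set ℝ)
      (fun t : ℝ => -(ε * (Li2 (-Complex.exp ((t:ℂ) + (v:ℂ) * Complex.I))).im)) := by
  set a : ℂ := Complex.exp ((v:ℂ) * Complex.I) with ha_def
  have haim : a.im = Real.sin v := Complex.exp_ofReal_mul_I_im v
  have ha : a.im ≠ 0 := by
    rw [haim]; intro h; rw [h, mul_zero] at hs; exact lt_irrefl 0 hs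
  have hexp : ∀ t : ℝ, Complex.exp ((t:ℂ) + (v:ℂ) * Complex.I)
      = ((Real.exp t : ℝ) : ℂ) * a := by
    intro t; rw [Complex.exp_add, Complex.ofReal_exp]
  have hfun : (fun t : ℝ => -(ε * (Li2 (-Complex.exp ((t:ℂ) + (v:ℂ) * Complex.I))).im))
      = fun t : ℝ => ε * ∫ u in (0:ℝ)..(Real.exp t), phiF a u := by
    funext t
    rw [hexp t, li2_im ha (Real.exp t)]
    ring
  rw [hfun]
  -- first derivative
  have hderiv : ∀ t : ℝ, HasDerivAt (fun t : ℝ => ε * ∫ u in (0:ℝ)..(Real.exp t), phiF a u)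
      (ε * (Complex.log (1 + a * (Real.exp t : ℝ))).im) t := by
    intro t
    have hFTC : HasDerivAt (fun x : ℝ => ∫ u in (0:ℝ)..x, phiF a u) (phiF a (Real.exp t))
        (Real.exp t) :=
      intervalIntegral.integral_hasDerivAt_right (phiF_intable ha _)
        ((phiF_meas a).aestronglyMeasurable.stronglyMeasurableAtFilter)
        (phiF_contAt ha (Real.exp_ne_zero t))
    have hcomp := hFTC.comp t (Real.hasDerivAt_exp t)
    have : phiF a (Real.exp t) * Real.exp t = (Complex.log (1 + a * (Real.exp t : ℝ))).im := by
      rw [phiF, div_mul_cancel₀ _ (Real.exp_ne_zero t)]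
    rw [this] at hcomp
    exact hcomp.const_mul ε
  set ψ : ℝ → ℝ := fun t : ℝ => ε * (Complex.log (1 + a * (Real.exp t : ℝ))).im with hψ
  have hderiv_eq : deriv (fun t : ℝ => ε * ∫ u in (0:ℝ)..(Real.exp t), phiF a u) = ψ := by
    funext t; exact (hderiv t).deriv
  -- second derivative: ψ strictly decreasing
  have hψanti : StrictAnti ψ := by
    apply strictAnti_of_deriv_neg
    intro x
    have h1 : HasDerivAt (fun t : ℝ => 1 + a * ((Real.exp t : ℝ) : ℂ))
        (a * (Real.exp x : ℝ)) x := by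
      have := ((Real.hasDerivAt_exp x).ofReal_comp.const_mul a).const_add 1
      simpa using this
    have hmem : (1 + a * ((Real.exp x : ℝ) : ℂ)) ∈ Complex.slitPlane := mem_slit ha _
    have h2 := h1.clog_real hmem
    have h3 : HasDerivAt (fun t : ℝ => (Complex.log (1 + a * ((Real.exp t : ℝ) : ℂ))).im)
        ((a * (Real.exp x : ℝ) / (1 + a * ((Real.exp x : ℝ) : ℂ))).im) x :=
      Complex.imCLM.hasFDerivAt.comp_hasDerivAt x h2
    have h4 : HasDerivAt ψ (ε * ((a * (Real.exp x : ℝ) / (1 + a * ((Real.exp x : ℝ) : ℂ))).im)) x :=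
      h3.const_mul ε
    rw [h4.deriv]
    -- now show negativity
    set z : ℂ := a * ((Real.exp x : ℝ) : ℂ) with hz
    have hzim : z.im = Real.sin v * Real.exp x := by
      rw [hz, Complex.mul_im, Complex.ofReal_im, Complex.ofReal_re, mul_zero, zero_add, haim]
    have hne : (1 + z) ≠ 0 := Complex.slitPlane_ne_zero hmem
    have hN : 0 < Complex.normSq (1 + z) := Complex.normSq_pos.2 hne
    have him : (z / (1 + z)).im = z.im / Complex.normSq (1 + z) := by
      rw [Complex.div_im]
      have h1re : (1 + z).re = 1 + z.re := by simp
      have h1im : (1 + z).im = z.im := by simp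
      rw [h1re, h1im]
      field_simp
      ring
    rw [him, hzim]
    have hnum : ε * (Real.sin v * Real.exp x) < 0 := by
      nlinarith [Real.exp_pos x, hs]
    calc ε * (Real.sin v * Real.exp x / Complex.normSq (1 + z))
        = ε * (Real.sin v * Real.exp x) / Complex.normSq (1 + z) := by ring
      _ < 0 := div_neg_of_neg_of_pos hnum hN
  -- conclude strict concavity
  have hcont : Continuous (fun t : ℝ => ε * ∫ u in (0:ℝ)..(Real.exp t), phiF a u) := by
    have : Differentiable ℝ (fun t : ℝ => ε * ∫ u in (0:ℝ)..(Real.exp t), phiF a u) :=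
      fun t => (hderiv t).differentiableAt
    exact this.continuous
  exact StrictAnti.strictConcaveOn_univ_of_deriv hcont (hderiv_eq ▸ hψanti)


lemma sum_coord_strictConcaveOn {n : ℕ} (hn : 0 < n) (f : Fin n → ℝ → ℝ)
    (hf : ∀ k, StrictConcaveOn ℝ Set.univ (f k)) :
    StrictConcaveOn ℝ (Set.univ : Set (Fin n → ℝ)) (fun h => ∑ k, f k (h k)) := by
  refine ⟨convex_univ, ?_⟩
  intro x _ y _ hxy a b ha hb hab
  obtain ⟨k0, hk0⟩ := Function.ne_iff.1 hxy
  have hle : ∀ k ∈ Finset.univ, a * f k (x k) + b * f k (y k) ≤ f k (a * x k + b * y k) := by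
    intro k _
    have := (hf k).concaveOn.2 (Set.mem_univ (x k)) (Set.mem_univ (y k)) ha.le hb.le hab
    simpa [smul_eq_mul] using this
  have hlt : a * f k0 (x k0) + b * f k0 (y k0) < f k0 (a * x k0 + b * y k0) := by
    have := (hf k0).2 (Set.mem_univ (x k0)) (Set.mem_univ (y k0)) hk0 ha hb hab
    simpa [smul_eq_mul] using this
  have hsum : ∑ k, (a * f k (x k) + b * f k (y k)) < ∑ k, f k (a * x k + b * y k) :=
    Finset.sum_lt_sum hle ⟨k0, Finset.mem_univ k0, hlt⟩
  calc a • ∑ k, f k (x k) + b • ∑ k, f k (y k)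
      = ∑ k, (a * f k (x k) + b * f k (y k)) := by
        simp [smul_eq_mul, Finset.mul_sum, Finset.sum_add_distrib]
    _ < ∑ k, f k (a * x k + b * y k) := hsum
    _ = ∑ k, f k ((a • x + b • y) k) := by simp [smul_eq_mul]

lemma concaveOn_of_affine {n : ℕ} (f : (Fin n → ℝ) → ℝ)
    (hf : ∀ x y : Fin n → ℝ, ∀ a b : ℝ, 0 ≤ a → 0 ≤ b → a + b = 1 →
      f (a • x + b • y) = a * f x + b * f y) :
    ConcaveOn ℝ (Set.univ : Set (Fin n → ℝ)) f :=
  ⟨convex_univ, fun x _ y _ a b ha hb hab => le_of_eq (by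
    rw [smul_eq_mul, smul_eq_mul, hf x y a b ha hb hab])⟩

lemma dot_cast {n : ℕ} (Q : Matrix (Fin n) (Fin n) ℝ) (x y : Fin n → ℝ) :
    (fun k => ((x k : ℝ) : ℂ)) ⬝ᵥ (Q.map Complex.ofReal).mulVec (fun k => ((y k : ℝ) : ℂ))
      = ((x ⬝ᵥ Q.mulVec y : ℝ) : ℂ) := by
  simp only [dotProduct, Matrix.mulVec, Matrix.map_apply]
  push_cast
  rfl

lemma q_im {n : ℕ} (Q : Matrix (Fin n) (Fin n) ℝ) (v x y : Fin n → ℝ) :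
    ((fun k => ((x k : ℝ) : ℂ) + ((v k : ℝ) : ℂ) * Complex.I) ⬝ᵥ
      (Q.map Complex.ofReal).mulVec
        (fun k => ((y k : ℝ) : ℂ) + ((v k : ℝ) : ℂ) * Complex.I)).im
    = x ⬝ᵥ Q.mulVec v + v ⬝ᵥ Q.mulVec y := by
  have hx : (fun k => ((x k : ℝ) : ℂ) + ((v k : ℝ) : ℂ) * Complex.I)
      = (fun k => ((x k : ℝ) : ℂ)) + Complex.I • (fun k => ((v k : ℝ) : ℂ)) := by
    funext k; simp [Pi.add_apply, Pi.smul_apply, smul_eq_mul]; ring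
  have hy : (fun k => ((y k : ℝ) : ℂ) + ((v k : ℝ) : ℂ) * Complex.I)
      = (fun k => ((y k : ℝ) : ℂ)) + Complex.I • (fun k => ((v k : ℝ) : ℂ)) := by
    funext k; simp [Pi.add_apply, Pi.smul_apply, smul_eq_mul]; ring
  rw [hx, hy]
  simp only [Matrix.mulVec_add, Matrix.mulVec_smul, add_dotProduct,
    smul_dotProduct, dotProduct_add, dotProduct_smul,
    dot_cast Q, smul_eq_mul]
  simp [Complex.add_im, Complex.mul_im, Complex.I_re, Complex.I_im]
  ring

lemma affine_re {n : ℕ} (Q : Matrix (Fin n) (Fin n) ℝ) (w : Fin n → ℂ) (v : Fin n → ℝ)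
    (eps : Fin n → ℝ) (h : Fin n → ℝ) :
    (Complex.I * ((fun k => ((h k : ℝ) : ℂ) + ((v k : ℝ) : ℂ) * Complex.I) ⬝ᵥ
        (Q.map Complex.ofReal).mulVec
          (fun k => ((h k : ℝ) : ℂ) + ((v k : ℝ) : ℂ) * Complex.I))
      + ∑ k, -((eps k : ℝ) : ℂ) * (((h k : ℝ) : ℂ) + ((v k : ℝ) : ℂ) * Complex.I) * w k).re
    = -(h ⬝ᵥ Q.mulVec v + v ⬝ᵥ Q.mulVec h)
      + ∑ k, (-(eps k)) * (h k * (w k).re - v k * (w k).im) := by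
  rw [Complex.add_re]
  congr 1
  · rw [Complex.I_mul_re, q_im]
  · rw [Complex.re_sum]
    apply Finset.sum_congr rfl
    intro k _
    simp only [Complex.mul_re, Complex.mul_im, Complex.add_re, Complex.add_im,
      Complex.neg_re, Complex.neg_im, Complex.ofReal_re, Complex.ofReal_im,
      Complex.I_re, Complex.I_im]
    ring


/-- Proposition 3.3 (concavSgen): for any fixed
`v ∈ ∏_{k ≤ n₊}(-π,0) × ∏_{k > n₊}(0,π)`, the function `h ↦ Re S(h + iv)` is
strictly concave on `ℝⁿ`. -/
theorem stmt_5 (nP nN : ℕ) (hn : 1 ≤ nP + nN)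
    (Q : Matrix (Fin (nP + nN)) (Fin (nP + nN)) ℝ) (hQ : Q.IsSymm)
    (w : Fin (nP + nN) → ℂ)
    (v : Fin (nP + nN) → ℝ)
    (hv : ∀ k : Fin (nP + nN),
      if (k : ℕ) < nP then v k ∈ Set.Ioo (-π) 0 else v k ∈ Set.Ioo 0 π) :
    StrictConcaveOn ℝ (Set.univ : Set (Fin (nP + nN) → ℝ))
      (fun h : Fin (nP + nN) → ℝ =>
        (potential nP nN Q w (fun k => (h k : ℂ) + (v k : ℂ) * Complex.I)).re) := by
  have hn0 : 0 < nP + nN := hn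
  -- per-coordinate strictly concave functions
  have hfk : ∀ k : Fin (nP + nN), StrictConcaveOn ℝ (Set.univ : Set ℝ)
      (fun t : ℝ => -(epsR nP (nP + nN) k *
        (Li2 (-Complex.exp ((t : ℂ) + ((v k : ℝ) : ℂ) * Complex.I))).im)) := by
    intro k
    apply key1d
    by_cases hk : (k : ℕ) < nP
    · have hvk := hv k; rw [if_pos hk] at hvk
      have hsin : Real.sin (v k) < 0 := Real.sin_neg_of_neg_of_neg_pi_lt hvk.2 hvk.1
      simpa [epsR, hk] using hsin
    · have hvk := hv k; rw [if_neg hk] at hvk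
      have hsin : 0 < Real.sin (v k) := Real.sin_pos_of_pos_of_lt_pi hvk.1 hvk.2
      simp only [epsR, hk, if_false]
      nlinarith
  have hG := sum_coord_strictConcaveOn hn0 _ hfk
  have hAconc : ConcaveOn ℝ (Set.univ : Set (Fin (nP + nN) → ℝ)) (fun h =>
      -(h ⬝ᵥ Q.mulVec v + v ⬝ᵥ Q.mulVec h)
        + ∑ k, (-(epsR nP (nP + nN) k)) * (h k * (w k).re - v k * (w k).im)) := by
    apply concaveOn_of_affine
    intro x y a b ha hb hab
    have hdot : ((a • x + b • y) ⬝ᵥ Q.mulVec v + v ⬝ᵥ Q.mulVec (a • x + b • y))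
        = a * (x ⬝ᵥ Q.mulVec v + v ⬝ᵥ Q.mulVec x)
          + b * (y ⬝ᵥ Q.mulVec v + v ⬝ᵥ Q.mulVec y) := by
      simp [add_dotProduct, smul_dotProduct, Matrix.mulVec_add,
        Matrix.mulVec_smul, dotProduct_add, dotProduct_smul, smul_eq_mul]
      ring
    have hsum : ∑ k, (-(epsR nP (nP + nN) k)) * ((a • x + b • y) k * (w k).re - v k * (w k).im)
        = a * ∑ k, (-(epsR nP (nP + nN) k)) * (x k * (w k).re - v k * (w k).im)
          + b * ∑ k, (-(epsR nP (nP + nN) k)) * (y k * (w k).re - v k * (w k).im) := by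
      rw [Finset.mul_sum, Finset.mul_sum, ← Finset.sum_add_distrib]
      apply Finset.sum_congr rfl
      intro k _
      have hk : (a • x + b • y) k = a * x k + b * y k := by simp [smul_eq_mul]
      rw [hk]
      linear_combination (-(epsR nP (nP + nN) k) * (v k * (w k).im)) * hab
    rw [hdot, hsum]
    ring
  have hdecomp : (fun h : Fin (nP + nN) → ℝ =>
      (potential nP nN Q w (fun k => (h k : ℂ) + (v k : ℂ) * Complex.I)).re)
      = (fun h : Fin (nP + nN) → ℝ => ∑ k, (fun t : ℝ => -(epsR nP (nP + nN) k *
            (Li2 (-Complex.exp ((t : ℂ) + ((v k : ℝ) : ℂ) * Complex.I))).im)) (h k))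
        + (fun h : Fin (nP + nN) → ℝ =>
            -(h ⬝ᵥ Q.mulVec v + v ⬝ᵥ Q.mulVec h)
              + ∑ k, (-(epsR nP (nP + nN) k)) * (h k * (w k).re - v k * (w k).im)) := by
    funext h
    simp only [Pi.add_apply, potential]
    rw [Complex.sub_re, Complex.add_re]
    rw [affine_re Q w v (epsR nP (nP + nN)) h]
    rw [Complex.I_mul_re, Complex.I_mul_re, Complex.im_sum, Complex.im_sum]
    have hsplit : ∑ k, -(epsR nP (nP + nN) k *
          (Li2 (-Complex.exp (((h k : ℝ) : ℂ) + ((v k : ℝ) : ℂ) * Complex.I))).im)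
        = (∑ k ∈ Finset.univ.filter (fun k : Fin (nP + nN) => (k : ℕ) < nP),
            -((Li2 (-Complex.exp (((h k : ℝ) : ℂ) + ((v k : ℝ) : ℂ) * Complex.I))).im))
          + ∑ k ∈ Finset.univ.filter (fun k : Fin (nP + nN) => ¬ (k : ℕ) < nP),
            (Li2 (-Complex.exp (((h k : ℝ) : ℂ) + ((v k : ℝ) : ℂ) * Complex.I))).im := by
      rw [← Finset.sum_filter_add_sum_filter_not Finset.univ
        (fun k : Fin (nP + nN) => (k : ℕ) < nP)]
      congr 1
      · apply Finset.sum_congr rfl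
        intro k hk
        have hk' : (k : ℕ) < nP := (Finset.mem_filter.1 hk).2
        simp [epsR, hk']
      · apply Finset.sum_congr rfl
        intro k hk
        have hk' : ¬ (k : ℕ) < nP := (Finset.mem_filter.1 hk).2
        simp [epsR, hk']
    rw [hsplit]
    simp only [Finset.sum_neg_distrib]
    ring
  rw [hdecomp]
  exact hG.add_concaveOn hAconc
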